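/- Under hypotheses (H₁)–(H₄) (g ∈ L¹, |f(t,u)| ≤ H_R(t) for |u| ≤ R with H_R ∈ L^∞, ‖H_R‖_∞(M₁+M₂) ≤ R, and measurability of t ↦ f(t,u(t)) for u ∈ B̄_R), the image T(B̄_R) of the operator Tu(t) = ∫₀¹ k(t,s)g(s)f(s,u(s))ds is relatively compact in C¹([0,1]). -/

import Mathlib

open MeasureTheory intervalIntegral

/-- The Green's function for `u'' = 0` with separated boundary conditions. -/
noncomputable def greenK (α β γ δ : ℝ) (t s : ℝ) : ℝ :=
  if s ≤ t then (γ + δ - γ * t) * (β + α * s) / (γ * β + α * γ + α * δ)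
  else (β + α * t) * (γ + δ - γ * s) / (γ * β + α * γ + α * δ)

/-- The partial derivative `∂k/∂t` of the Green's function, defined piecewise. -/
noncomputable def greenKt (α β γ δ : ℝ) (t s : ℝ) : ℝ :=
  if s < t then (-γ) * (β + α * s) / (γ * β + α * γ + α * δ)
  else α * (γ + δ - γ * s) / (γ * β + α * γ + α * δ)

/-- The `C¹([0,1])` norm `‖u‖ = sup |u| + sup |u'|`. -/
noncomputable def normC1 (u : ℝ → ℝ) : ℝ :=
  sSup ((fun t => |u t|) '' Set.Icc (0 : ℝ) 1) +
    sSup ((fun t => |deriv u t|) '' Set.Icc (0 : ℝ) 1)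

/-- Membership in the closed ball `B̄_R` of `C¹([0,1])`. -/
noncomputable def memBallC1 (R : ℝ) (u : ℝ → ℝ) : Prop :=
  ContinuousOn u (Set.Icc (0 : ℝ) 1) ∧
  (∀ t ∈ Set.Icc (0 : ℝ) 1, DifferentiableAt ℝ u t) ∧
  ContinuousOn (deriv u) (Set.Icc (0 : ℝ) 1) ∧
  normC1 u ≤ R

/-- The constant `M₁ = sup_t ∫₀¹ k(t,s)|g(s)| ds`. -/
noncomputable def Mone (α β γ δ : ℝ) (g : ℝ → ℝ) : ℝ :=
  ⨆ t : Set.Icc (0 : ℝ) 1, ∫ s in (0 : ℝ)..1, greenK α β γ δ t s * |g s|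

/-- The constant `M₂ = sup_t ∫₀¹ |∂k/∂t(t,s)||g(s)| ds`. -/
noncomputable def Mtwo (α β γ δ : ℝ) (g : ℝ → ℝ) : ℝ :=
  ⨆ t : Set.Icc (0 : ℝ) 1, ∫ s in (0 : ℝ)..1, |greenKt α β γ δ t s| * |g s|

/-- The Hammerstein integral operator `Tu(t) = ∫₀¹ k(t,s) g(s) f(s,u(s)) ds`. -/
noncomputable def hammOp (α β γ δ : ℝ) (g : ℝ → ℝ) (f : ℝ → ℝ → ℝ)
    (u : ℝ → ℝ) : ℝ → ℝ :=
  fun t => ∫ s in (0 : ℝ)..1, greenK α β γ δ t s * g s * f s (u s)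

/-! ### Auxiliary definitions -/

/-- A uniform bound for `|∂k/∂t|` on the square. -/
noncomputable def kdC (α β γ δ : ℝ) : ℝ :=
  (γ * (β + α) + α * (γ + δ)) / (γ * β + α * γ + α * δ)

/-- The primitive of `|g|` (extended by zero outside `(0,1]`). -/
noncomputable def primG (g : ℝ → ℝ) : ℝ → ℝ :=
  fun t => ∫ x in (0 : ℝ)..t, (Set.Ioc (0 : ℝ) 1).indicator (fun s => |g s|) x

/-- The derivative of the Hammerstein operator. -/
noncomputable def Dop (α β γ δ : ℝ) (g : ℝ → ℝ) (f : ℝ → ℝ → ℝ)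
    (u : ℝ → ℝ) : ℝ → ℝ :=
  fun r => ∫ s in Set.Ioc (0 : ℝ) 1, greenKt α β γ δ r s * (g s * f s (u s))

section Aux

variable {α β γ δ : ℝ}

lemma ae_ne_real (c : ℝ) : ∀ᵐ x : ℝ, x ≠ c := by
  rw [MeasureTheory.ae_iff]
  simp only [ne_eq, not_not, Set.setOf_eq_eq_singleton]
  exact Real.volume_singleton

lemma greenK_eq (α β γ δ t s : ℝ) :
    greenK α β γ δ t s =
      (β + α * min t s) * (γ + δ - γ * max t s) / (γ * β + α * γ + α * δ) := by
  unfold greenK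
  rcases le_or_gt s t with h | h
  · rw [if_pos h, min_eq_right h, max_eq_left h]; ring
  · rw [if_neg (not_le.mpr h), min_eq_left h.le, max_eq_right h.le]

lemma greenK_continuous_t (α β γ δ s : ℝ) : Continuous (fun t => greenK α β γ δ t s) := by
  simp only [greenK_eq]; fun_prop

lemma greenK_continuous_s (α β γ δ t : ℝ) : Continuous (fun s => greenK α β γ δ t s) := by
  simp only [greenK_eq]; fun_prop

lemma greenK_meas_s (α β γ δ t : ℝ) : Measurable (fun s => greenK α β γ δ t s) :=
  (greenK_continuous_s α β γ δ t).measurable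

lemma greenKt_meas_s (α β γ δ t : ℝ) : Measurable (fun s => greenKt α β γ δ t s) := by
  unfold greenKt
  exact Measurable.ite (measurableSet_lt measurable_id measurable_const)
    (by fun_prop) (by fun_prop)

lemma greenKt_intervalIntegrable (α β γ δ s : ℝ) (t₁ t₂ : ℝ) :
    IntervalIntegrable (fun r => greenKt α β γ δ r s) volume t₁ t₂ := by
  have hmeas : Measurable (fun r => greenKt α β γ δ r s) := by
    unfold greenKt
    exact Measurable.ite (measurableSet_lt measurable_const measurable_id) measurable_const
      measurable_const
  rw [intervalIntegrable_iff]
  refine MeasureTheory.Integrable.mono'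
    (g := fun _ => |(-γ) * (β + α * s) / (γ * β + α * γ + α * δ)|
      + |α * (γ + δ - γ * s) / (γ * β + α * γ + α * δ)|)
    (integrableOn_const measure_Ioc_lt_top.ne)
    hmeas.aestronglyMeasurable ?_
  filter_upwards with r
  rw [Real.norm_eq_abs]
  unfold greenKt
  split
  · exact le_add_of_nonneg_right (abs_nonneg _)
  · exact le_add_of_nonneg_left (abs_nonneg _)

lemma greenKt_integral (α β γ δ : ℝ) (s t₁ t₂ : ℝ) (h12 : t₁ ≤ t₂) :
    ∫ r in Set.Ioc t₁ t₂, greenKt α β γ δ r s = greenK α β γ δ t₂ s - greenK α β γ δ t₁ s := by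
  set Γ := γ * β + α * γ + α * δ with hΓdef
  set F' : ℝ → ℝ := fun r => if s ≤ r then (-γ) * (β + α * s) / Γ else α * (γ + δ - γ * s) / Γ
    with hF'
  have hcongr : ∫ r in Set.Ioc t₁ t₂, greenKt α β γ δ r s = ∫ r in Set.Ioc t₁ t₂, F' r := by
    refine integral_congr_ae (ae_restrict_of_ae ?_)
    filter_upwards [ae_ne_real s] with r hr
    rcases lt_or_gt_of_ne hr with h | h
    · simp [greenKt, hF', not_lt.mpr h.le, not_le.mpr h]; rfl
    · simp [greenKt, hF', h, h.le]; rfl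
  rw [hcongr, ← intervalIntegral.integral_of_le h12]
  have hF'int : IntervalIntegrable F' volume t₁ t₂ := by
    have hmeas : Measurable F' := by
      exact Measurable.ite (measurableSet_le measurable_const measurable_id) measurable_const
        measurable_const
    rw [intervalIntegrable_iff]
    refine MeasureTheory.Integrable.mono'
      (g := fun _ => |(-γ) * (β + α * s) / Γ| + |α * (γ + δ - γ * s) / Γ|)
      (integrableOn_const measure_Ioc_lt_top.ne)
      hmeas.aestronglyMeasurable ?_
    filter_upwards with r
    simp only [hF', Real.norm_eq_abs]
    split
    · exact le_add_of_nonneg_right (abs_nonneg _)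
    · exact le_add_of_nonneg_left (abs_nonneg _)
  refine integral_eq_sub_of_hasDeriv_right_of_le h12
    ((greenK_continuous_t α β γ δ s).continuousOn) ?_ hF'int
  intro x hx
  rcases le_or_gt s x with hsx | hxs
  · have hL : HasDerivAt (fun r : ℝ => (γ + δ - γ * r) * ((β + α * s) / Γ))
        ((-γ) * (β + α * s) / Γ) x := by
      have := (((hasDerivAt_id x).const_mul γ).const_sub (γ + δ)).mul_const ((β + α * s) / Γ)
      exact this.congr_deriv (by ring)
    rw [hF']
    simp only [if_pos hsx]
    refine (hL.hasDerivWithinAt).congr (fun y hy => ?_) ?_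
    · have : s ≤ y := hsx.trans (le_of_lt (Set.mem_Ioi.mp hy))
      simp [greenK, this]; ring
    · simp [greenK, hsx]; ring
  · have hL : HasDerivAt (fun r : ℝ => (β + α * r) * ((γ + δ - γ * s) / Γ))
        (α * (γ + δ - γ * s) / Γ) x := by
      have := (((hasDerivAt_id x).const_mul α).const_add β).mul_const ((γ + δ - γ * s) / Γ)
      exact this.congr_deriv (by ring)
    rw [hF']
    simp only [if_neg (not_le.mpr hxs)]
    have hev : (fun r => greenK α β γ δ r s)
        =ᶠ[nhds x] fun r => (β + α * r) * ((γ + δ - γ * s) / Γ) := by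
      filter_upwards [Iio_mem_nhds hxs] with y hy
      simp [greenK, not_le.mpr (Set.mem_Iio.mp hy)]; ring
    exact (hL.congr_of_eventuallyEq hev).hasDerivWithinAt

lemma kdC_nonneg (hα : 0 ≤ α) (hβ : 0 ≤ β) (hγ : 0 ≤ γ) (hδ : 0 ≤ δ)
    (hΓ : 0 < γ * β + α * γ + α * δ) : 0 ≤ kdC α β γ δ :=
  div_nonneg (by positivity) hΓ.le

lemma greenKt_abs_le (hα : 0 ≤ α) (hβ : 0 ≤ β) (hγ : 0 ≤ γ) (hδ : 0 ≤ δ)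
    (hΓ : 0 < γ * β + α * γ + α * δ) {s : ℝ} (hs : s ∈ Set.Icc (0:ℝ) 1) (r : ℝ) :
    |greenKt α β γ δ r s| ≤ kdC α β γ δ := by
  obtain ⟨hs0, hs1⟩ := hs
  unfold greenKt kdC
  have h1 : 0 ≤ β + α * s := by positivity
  have h2 : 0 ≤ γ + δ - γ * s := by nlinarith
  split
  · rw [abs_div, abs_of_pos hΓ]
    apply div_le_div_of_nonneg_right ?_ hΓ.le
    rw [abs_mul, abs_neg, abs_of_nonneg hγ, abs_of_nonneg h1]
    nlinarith
  · rw [abs_div, abs_of_pos hΓ]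
    apply div_le_div_of_nonneg_right ?_ hΓ.le
    rw [abs_mul, abs_of_nonneg hα, abs_of_nonneg h2]
    nlinarith

lemma greenKt_sub_abs_le (hα : 0 ≤ α) (hβ : 0 ≤ β) (hγ : 0 ≤ γ) (hδ : 0 ≤ δ)
    (hΓ : 0 < γ * β + α * γ + α * δ) {s t₁ t₂ : ℝ} (h12 : t₁ ≤ t₂)
    (hs : s ∈ Set.Icc (0:ℝ) 1) (hne : s ≠ t₁) :
    |greenKt α β γ δ t₂ s - greenKt α β γ δ t₁ s|
      ≤ kdC α β γ δ * Set.indicator (Set.Ioc t₁ t₂) (fun _ => (1:ℝ)) s := by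
  obtain ⟨hs0, hs1⟩ := hs
  have h1 : 0 ≤ β + α * s := by positivity
  have h2 : 0 ≤ γ + δ - γ * s := by nlinarith
  by_cases hc2 : s < t₂
  · by_cases hc1 : s < t₁
    · simp only [greenKt, if_pos hc1, if_pos hc2, sub_self, abs_zero]
      exact mul_nonneg (kdC_nonneg hα hβ hγ hδ hΓ)
        (Set.indicator_nonneg (fun _ _ => zero_le_one) s)
    · have hmem : s ∈ Set.Ioc t₁ t₂ := ⟨lt_of_le_of_ne (not_lt.mp hc1) (Ne.symm hne), hc2.le⟩
      rw [Set.indicator_of_mem hmem, mul_one]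
      rw [greenKt, if_pos hc2, greenKt, if_neg hc1]
      rw [div_sub_div_same, abs_div, abs_of_pos hΓ, kdC]
      apply div_le_div_of_nonneg_right ?_ hΓ.le
      have : |(-γ) * (β + α * s) - α * (γ + δ - γ * s)|
          = γ * (β + α * s) + α * (γ + δ - γ * s) := by
        rw [abs_sub_comm, abs_of_nonneg] <;> nlinarith
      rw [this]
      nlinarith
  · have hc1 : ¬ s < t₁ := fun h => hc2 (h.trans_le h12)
    simp only [greenKt, if_neg hc1, if_neg hc2, sub_self, abs_zero]
    exact mul_nonneg (kdC_nonneg hα hβ hγ hδ hΓ)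
      (Set.indicator_nonneg (fun _ _ => zero_le_one) s)

lemma greenK_nonneg (hα : 0 ≤ α) (hβ : 0 ≤ β) (hγ : 0 ≤ γ) (hδ : 0 ≤ δ)
    (hΓ : 0 < γ * β + α * γ + α * δ) {t s : ℝ} (ht : t ∈ Set.Icc (0:ℝ) 1)
    (hs : s ∈ Set.Icc (0:ℝ) 1) : 0 ≤ greenK α β γ δ t s := by
  obtain ⟨ht0, ht1⟩ := ht; obtain ⟨hs0, hs1⟩ := hs
  have h1 : 0 ≤ β + α * s := by positivity
  have h2 : 0 ≤ γ + δ - γ * s := by nlinarith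
  have h3 : 0 ≤ β + α * t := by positivity
  have h4 : 0 ≤ γ + δ - γ * t := by nlinarith
  unfold greenK
  split <;> apply div_nonneg _ hΓ.le <;> nlinarith

lemma greenK_le (hα : 0 ≤ α) (hβ : 0 ≤ β) (hγ : 0 ≤ γ) (hδ : 0 ≤ δ)
    (hΓ : 0 < γ * β + α * γ + α * δ) {t s : ℝ} (ht : t ∈ Set.Icc (0:ℝ) 1)
    (hs : s ∈ Set.Icc (0:ℝ) 1) :
    greenK α β γ δ t s ≤ (γ + δ) * (β + α) / (γ * β + α * γ + α * δ) := by
  obtain ⟨ht0, ht1⟩ := ht; obtain ⟨hs0, hs1⟩ := hs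
  have h1 : 0 ≤ β + α * s := by positivity
  have h3 : 0 ≤ β + α * t := by positivity
  unfold greenK
  split <;> apply div_le_div_of_nonneg_right _ hΓ.le
  · exact mul_le_mul (by nlinarith) (by nlinarith) h1 (by positivity)
  · exact (mul_le_mul (by nlinarith : β + α * t ≤ β + α)
      (by nlinarith : γ + δ - γ * s ≤ γ + δ) (by nlinarith) (by positivity)).trans_eq
      (mul_comm _ _)

lemma primG_continuous {g : ℝ → ℝ} (hg : IntegrableOn g (Set.Icc (0:ℝ) 1)) :
    Continuous (primG g) := by
  refine intervalIntegral.continuous_primitive (fun a b => ?_) 0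
  exact (MeasureTheory.IntegrableOn.integrable_indicator
    ((hg.mono_set Set.Ioc_subset_Icc_self).abs) measurableSet_Ioc).intervalIntegrable

end Aux

section Bounds

variable {α β γ δ R CH : ℝ} {g : ℝ → ℝ} {u : ℝ → ℝ}

lemma memBallC1_pointwise {R : ℝ} {u : ℝ → ℝ} (hu : memBallC1 R u) :
    ∀ s ∈ Set.Icc (0:ℝ) 1, u s ∈ Set.Icc (-R) R := by
  obtain ⟨hc, hd, hdc, hn⟩ := hu
  intro s hs
  have himg : BddAbove ((fun t => |u t|) '' Set.Icc (0:ℝ) 1) :=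
    (isCompact_Icc.image_of_continuousOn hc.abs).bddAbove
  have h2 : 0 ≤ sSup ((fun t => |deriv u t|) '' Set.Icc (0:ℝ) 1) :=
    Real.sSup_nonneg (by rintro x ⟨t, ht, rfl⟩; exact abs_nonneg _)
  have h1 : |u s| ≤ sSup ((fun t => |u t|) '' Set.Icc (0:ℝ) 1) :=
    le_csSup himg ⟨s, hs, rfl⟩
  have : |u s| ≤ R := by unfold normC1 at hn; linarith
  have := abs_le.mp this
  exact ⟨this.1, this.2⟩

lemma integrableOn_greenK_abs_g (hα : 0 ≤ α) (hβ : 0 ≤ β) (hγ : 0 ≤ γ) (hδ : 0 ≤ δ)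
    (hΓ : 0 < γ * β + α * γ + α * δ) (hg : IntegrableOn g (Set.Icc (0:ℝ) 1))
    {t : ℝ} (ht : t ∈ Set.Icc (0:ℝ) 1) :
    IntegrableOn (fun s => greenK α β γ δ t s * |g s|) (Set.Ioc (0:ℝ) 1) := by
  refine MeasureTheory.Integrable.bdd_mul
    (c := (γ + δ) * (β + α) / (γ * β + α * γ + α * δ))
    ((hg.mono_set Set.Ioc_subset_Icc_self).abs)
    (greenK_meas_s α β γ δ t).aestronglyMeasurable ?_
  filter_upwards [ae_restrict_mem measurableSet_Ioc] with s hs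
  have hs' : s ∈ Set.Icc (0:ℝ) 1 := Set.Ioc_subset_Icc_self hs
  rw [Real.norm_eq_abs, abs_of_nonneg (greenK_nonneg hα hβ hγ hδ hΓ ht hs')]
  exact greenK_le hα hβ hγ hδ hΓ ht hs'

lemma integrableOn_greenKt_abs_g (hα : 0 ≤ α) (hβ : 0 ≤ β) (hγ : 0 ≤ γ) (hδ : 0 ≤ δ)
    (hΓ : 0 < γ * β + α * γ + α * δ) (hg : IntegrableOn g (Set.Icc (0:ℝ) 1)) (t : ℝ) :
    IntegrableOn (fun s => |greenKt α β γ δ t s| * |g s|) (Set.Ioc (0:ℝ) 1) := by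
  refine MeasureTheory.Integrable.bdd_mul (c := kdC α β γ δ)
    ((hg.mono_set Set.Ioc_subset_Icc_self).abs)
    (greenKt_meas_s α β γ δ t).abs.aestronglyMeasurable ?_
  filter_upwards [ae_restrict_mem measurableSet_Ioc] with s hs
  have hs' : s ∈ Set.Icc (0:ℝ) 1 := Set.Ioc_subset_Icc_self hs
  rw [Real.norm_eq_abs, abs_abs]
  exact greenKt_abs_le hα hβ hγ hδ hΓ hs' t

lemma I1_le_Mone (hα : 0 ≤ α) (hβ : 0 ≤ β) (hγ : 0 ≤ γ) (hδ : 0 ≤ δ)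
    (hΓ : 0 < γ * β + α * γ + α * δ) (hg : IntegrableOn g (Set.Icc (0:ℝ) 1))
    {t : ℝ} (ht : t ∈ Set.Icc (0:ℝ) 1) :
    ∫ s in (0:ℝ)..1, greenK α β γ δ t s * |g s| ≤ Mone α β γ δ g := by
  have hbdd : BddAbove (Set.range fun t : Set.Icc (0:ℝ) 1 =>
      ∫ s in (0:ℝ)..1, greenK α β γ δ t s * |g s|) := by
    refine ⟨(γ + δ) * (β + α) / (γ * β + α * γ + α * δ) * ∫ s in Set.Ioc (0:ℝ) 1, |g s|, ?_⟩
    rintro x ⟨t', rfl⟩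
    simp only
    rw [intervalIntegral.integral_of_le zero_le_one]
    calc ∫ s in Set.Ioc (0:ℝ) 1, greenK α β γ δ t' s * |g s|
        ≤ ∫ s in Set.Ioc (0:ℝ) 1, (γ + δ) * (β + α) / (γ * β + α * γ + α * δ) * |g s| := by
          refine integral_mono_ae (integrableOn_greenK_abs_g hα hβ hγ hδ hΓ hg t'.2)
            (((hg.mono_set Set.Ioc_subset_Icc_self).abs).const_mul _) ?_
          filter_upwards [ae_restrict_mem measurableSet_Ioc] with s hs
          have hs' : s ∈ Set.Icc (0:ℝ) 1 := Set.Ioc_subset_Icc_self hs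
          exact mul_le_mul_of_nonneg_right (greenK_le hα hβ hγ hδ hΓ t'.2 hs') (abs_nonneg _)
      _ = (γ + δ) * (β + α) / (γ * β + α * γ + α * δ) * ∫ s in Set.Ioc (0:ℝ) 1, |g s| :=
          integral_const_mul _ _
  exact le_ciSup hbdd (⟨t, ht⟩ : Set.Icc (0:ℝ) 1)

lemma I2_le_Mtwo (hα : 0 ≤ α) (hβ : 0 ≤ β) (hγ : 0 ≤ γ) (hδ : 0 ≤ δ)
    (hΓ : 0 < γ * β + α * γ + α * δ) (hg : IntegrableOn g (Set.Icc (0:ℝ) 1))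
    {t : ℝ} (ht : t ∈ Set.Icc (0:ℝ) 1) :
    ∫ s in (0:ℝ)..1, |greenKt α β γ δ t s| * |g s| ≤ Mtwo α β γ δ g := by
  have hbdd : BddAbove (Set.range fun t : Set.Icc (0:ℝ) 1 =>
      ∫ s in (0:ℝ)..1, |greenKt α β γ δ t s| * |g s|) := by
    refine ⟨kdC α β γ δ * ∫ s in Set.Ioc (0:ℝ) 1, |g s|, ?_⟩
    rintro x ⟨t', rfl⟩
    simp only
    rw [intervalIntegral.integral_of_le zero_le_one]
    calc ∫ s in Set.Ioc (0:ℝ) 1, |greenKt α β γ δ t' s| * |g s|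
        ≤ ∫ s in Set.Ioc (0:ℝ) 1, kdC α β γ δ * |g s| := by
          refine integral_mono_ae (integrableOn_greenKt_abs_g hα hβ hγ hδ hΓ hg t')
            (((hg.mono_set Set.Ioc_subset_Icc_self).abs).const_mul _) ?_
          filter_upwards [ae_restrict_mem measurableSet_Ioc] with s hs
          have hs' : s ∈ Set.Icc (0:ℝ) 1 := Set.Ioc_subset_Icc_self hs
          exact mul_le_mul_of_nonneg_right (greenKt_abs_le hα hβ hγ hδ hΓ hs' t')
            (abs_nonneg _)
      _ = kdC α β γ δ * ∫ s in Set.Ioc (0:ℝ) 1, |g s| := integral_const_mul _ _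
  exact le_ciSup hbdd (⟨t, ht⟩ : Set.Icc (0:ℝ) 1)

lemma Mone_nonneg (hα : 0 ≤ α) (hβ : 0 ≤ β) (hγ : 0 ≤ γ) (hδ : 0 ≤ δ)
    (hΓ : 0 < γ * β + α * γ + α * δ) (hg : IntegrableOn g (Set.Icc (0:ℝ) 1)) :
    0 ≤ Mone α β γ δ g := by
  refine le_trans ?_ (I1_le_Mone hα hβ hγ hδ hΓ hg (Set.left_mem_Icc.mpr zero_le_one))
  refine intervalIntegral.integral_nonneg zero_le_one (fun s hs => ?_)
  exact mul_nonneg (greenK_nonneg hα hβ hγ hδ hΓ (Set.left_mem_Icc.mpr zero_le_one) hs)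
    (abs_nonneg _)

lemma Mtwo_nonneg (hα : 0 ≤ α) (hβ : 0 ≤ β) (hγ : 0 ≤ γ) (hδ : 0 ≤ δ)
    (hΓ : 0 < γ * β + α * γ + α * δ) (hg : IntegrableOn g (Set.Icc (0:ℝ) 1)) :
    0 ≤ Mtwo α β γ δ g := by
  refine le_trans ?_ (I2_le_Mtwo hα hβ hγ hδ hΓ hg (Set.left_mem_Icc.mpr zero_le_one))
  exact intervalIntegral.integral_nonneg zero_le_one
    (fun s hs => mul_nonneg (abs_nonneg _) (abs_nonneg _))

end Bounds

section Master

variable {α β γ δ R CH : ℝ} {g : ℝ → ℝ} {f : ℝ → ℝ → ℝ} {H : ℝ → ℝ}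

lemma primG_mono {g : ℝ → ℝ} (hg : IntegrableOn g (Set.Icc (0:ℝ) 1)) :
    Monotone (primG g) := by
  intro a b hab
  have hI : ∀ c d : ℝ, IntervalIntegrable ((Set.Ioc (0:ℝ) 1).indicator fun s => |g s|)
      volume c d := fun c d =>
    (MeasureTheory.IntegrableOn.integrable_indicator
      ((hg.mono_set Set.Ioc_subset_Icc_self).abs) measurableSet_Ioc).intervalIntegrable
  have hsub : primG g b - primG g a
      = ∫ x in a..b, (Set.Ioc (0:ℝ) 1).indicator (fun s => |g s|) x :=
    intervalIntegral.integral_interval_sub_left (hI 0 b) (hI 0 a)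
  have hnn : 0 ≤ ∫ x in a..b, (Set.Ioc (0:ℝ) 1).indicator (fun s => |g s|) x :=
    intervalIntegral.integral_nonneg hab
      (fun x _ => Set.indicator_nonneg (fun y _ => abs_nonneg (g y)) x)
  linarith

lemma hammOp_facts
    (hα : 0 ≤ α) (hβ : 0 ≤ β) (hγ : 0 ≤ γ) (hδ : 0 ≤ δ)
    (hΓ : 0 < γ * β + α * γ + α * δ)
    (hg : IntegrableOn g (Set.Icc (0:ℝ) 1))
    (hH : ∀ᵐ t ∂(volume.restrict (Set.Icc (0:ℝ) 1)), ∀ x ∈ Set.Icc (-R) R, |f t x| ≤ H t)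
    (hHC : ∀ᵐ t ∂(volume.restrict (Set.Icc (0:ℝ) 1)), |H t| ≤ CH)
    (hCH0 : 0 ≤ CH)
    (u : ℝ → ℝ) (hu : memBallC1 R u)
    (hfm : AEMeasurable (fun t => f t (u t)) (volume.restrict (Set.Icc (0:ℝ) 1))) :
    (∀ t, HasDerivAt (hammOp α β γ δ g f u) (Dop α β γ δ g f u t) t) ∧
    (∀ t₁ t₂, t₁ ≤ t₂ → hammOp α β γ δ g f u t₂ - hammOp α β γ δ g f u t₁
        = ∫ r in Set.Ioc t₁ t₂, Dop α β γ δ g f u r) ∧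
    (∀ t ∈ Set.Icc (0:ℝ) 1, |hammOp α β γ δ g f u t| ≤ CH * Mone α β γ δ g) ∧
    (∀ t ∈ Set.Icc (0:ℝ) 1, |Dop α β γ δ g f u t| ≤ CH * Mtwo α β γ δ g) ∧
    (∀ a b : ℝ, |Dop α β γ δ g f u a - Dop α β γ δ g f u b|
        ≤ kdC α β γ δ * CH * |primG g a - primG g b|) ∧
    Continuous (Dop α β γ δ g f u) := by
  have hIccIoc : Set.Ioc (0:ℝ) 1 ⊆ Set.Icc (0:ℝ) 1 := Set.Ioc_subset_Icc_self
  set μ := volume.restrict (Set.Ioc (0:ℝ) 1) with hμ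
  set h : ℝ → ℝ := fun s => g s * f s (u s) with hhdef
  have ham : AEMeasurable h (volume.restrict (Set.Icc (0:ℝ) 1)) := hg.aemeasurable.mul hfm
  obtain ⟨h', h'meas, hh'⟩ :
      ∃ h', Measurable h' ∧ h =ᵐ[volume.restrict (Set.Icc (0:ℝ) 1)] h' :=
    ⟨ham.mk h, ham.measurable_mk, ham.ae_eq_mk⟩
  have hbnd : ∀ᵐ s ∂(volume.restrict (Set.Icc (0:ℝ) 1)), |h s| ≤ CH * |g s| := by
    filter_upwards [hH, hHC, ae_restrict_mem measurableSet_Icc] with s h1 h2 h3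
    calc |h s| = |g s| * |f s (u s)| := abs_mul _ _
      _ ≤ |g s| * H s :=
          mul_le_mul_of_nonneg_left (h1 _ (memBallC1_pointwise hu s h3)) (abs_nonneg _)
      _ ≤ |g s| * CH := mul_le_mul_of_nonneg_left ((le_abs_self _).trans h2) (abs_nonneg _)
      _ = CH * |g s| := mul_comm _ _
  have hbnd' : ∀ᵐ s ∂μ, |h s| ≤ CH * |g s| :=
    ae_restrict_of_ae_restrict_of_subset hIccIoc hbnd
  have hh'' : ∀ᵐ s ∂μ, h s = h' s := ae_restrict_of_ae_restrict_of_subset hIccIoc hh'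
  have ham' : AEStronglyMeasurable h μ :=
    (ham.mono_measure (Measure.restrict_mono hIccIoc le_rfl)).aestronglyMeasurable
  have hInt : Integrable h μ := by
    refine Integrable.mono' (((hg.mono_set hIccIoc).abs).const_mul CH) ham' ?_
    filter_upwards [hbnd'] with s hs
    simpa [Real.norm_eq_abs] using hs
  have hOp : ∀ t, hammOp α β γ δ g f u t
      = ∫ s in Set.Ioc (0:ℝ) 1, greenK α β γ δ t s * h s := by
    intro t
    simp only [hammOp]
    rw [intervalIntegral.integral_of_le zero_le_one]
    simp only [hhdef, mul_assoc]
  have hDop : ∀ t, Dop α β γ δ g f u t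
      = ∫ s in Set.Ioc (0:ℝ) 1, greenKt α β γ δ t s * h s := by
    intro t; simp only [Dop, hhdef]
  have hIntK : ∀ t, Integrable (fun s => greenK α β γ δ t s * h s) μ := by
    intro t
    obtain ⟨C, hC⟩ := (isCompact_Icc (a := (0:ℝ)) (b := 1)).exists_bound_of_continuousOn
      (greenK_continuous_s α β γ δ t).continuousOn
    refine Integrable.bdd_mul (c := C) hInt (greenK_meas_s α β γ δ t).aestronglyMeasurable ?_
    filter_upwards [ae_restrict_mem measurableSet_Ioc] with s hs
    exact hC s (hIccIoc hs)
  have hIntKt : ∀ r, Integrable (fun s => greenKt α β γ δ r s * h s) μ := by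
    intro r
    refine Integrable.bdd_mul (c := kdC α β γ δ) hInt
      (greenKt_meas_s α β γ δ r).aestronglyMeasurable ?_
    filter_upwards [ae_restrict_mem measurableSet_Ioc] with s hs
    rw [Real.norm_eq_abs]
    exact greenKt_abs_le hα hβ hγ hδ hΓ (hIccIoc hs) r
  -- the representation formula
  have hrepr : ∀ t₁ t₂, t₁ ≤ t₂ → hammOp α β γ δ g f u t₂ - hammOp α β γ δ g f u t₁
      = ∫ r in Set.Ioc t₁ t₂, Dop α β γ δ g f u r := by
    intro t₁ t₂ h12
    set ν := volume.restrict (Set.Ioc t₁ t₂) with hν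
    haveI : IsFiniteMeasure ν := ⟨by rw [Measure.restrict_apply_univ]; exact measure_Ioc_lt_top⟩
    have cond1 : ∀ s, Integrable (fun r => greenKt α β γ δ r s * h s) ν := by
      intro s
      have : IntegrableOn (fun r => greenKt α β γ δ r s) (Set.Ioc t₁ t₂) volume :=
        (intervalIntegrable_iff_integrableOn_Ioc_of_le h12).mp
          (greenKt_intervalIntegrable α β γ δ s t₁ t₂)
      exact this.mul_const (h s)
    have hprod : Integrable (Function.uncurry fun s r => greenKt α β γ δ r s * h s)
        (μ.prod ν) := by
      have hktm : Measurable (fun p : ℝ × ℝ => greenKt α β γ δ p.2 p.1) := by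
        unfold greenKt
        exact Measurable.ite (measurableSet_lt measurable_fst measurable_snd)
          (by fun_prop) (by fun_prop)
      have hfst : (fun p : ℝ × ℝ => h p.1) =ᵐ[μ.prod ν] (fun p => h' p.1) :=
        MeasureTheory.Measure.quasiMeasurePreserving_fst.ae hh''
      have h1f : AEStronglyMeasurable
          (Function.uncurry fun s r => greenKt α β γ δ r s * h s) (μ.prod ν) := by
        refine ((hktm.mul (h'meas.comp measurable_fst)).aestronglyMeasurable).congr ?_
        filter_upwards [hfst] with p hp
        simp only [Function.uncurry, Function.comp]
        rw [hp]
        rfl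
      rw [integrable_prod_iff h1f]
      refine ⟨Filter.Eventually.of_forall (fun s => cond1 s), ?_⟩
      refine Integrable.mono' (g := fun s => kdC α β γ δ * |h s| * (t₂ - t₁))
        ((hInt.abs.const_mul _).mul_const _) h1f.norm.integral_prod_right' ?_
      filter_upwards [ae_restrict_mem measurableSet_Ioc] with s hs
      have hs' : s ∈ Set.Icc (0:ℝ) 1 := hIccIoc hs
      rw [Real.norm_eq_abs, abs_of_nonneg (integral_nonneg (fun r => norm_nonneg _))]
      have hmono : (∫ r, ‖(Function.uncurry fun s r => greenKt α β γ δ r s * h s) (s, r)‖ ∂ν)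
          ≤ ∫ _ : ℝ, kdC α β γ δ * |h s| ∂ν := by
        refine integral_mono (cond1 s).norm (integrable_const _) (fun r => ?_)
        simp only [Function.uncurry, Real.norm_eq_abs, abs_mul]
        exact mul_le_mul_of_nonneg_right (greenKt_abs_le hα hβ hγ hδ hΓ hs' r) (abs_nonneg _)
      refine hmono.trans ?_
      rw [_root_.MeasureTheory.integral_const, smul_eq_mul, hν, measureReal_restrict_apply_univ,
        Real.volume_real_Ioc_of_le h12]
      ring_nf
      exact le_refl _
    have hsub : ∀ s, greenK α β γ δ t₂ s * h s - greenK α β γ δ t₁ s * h s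
        = ∫ r in Set.Ioc t₁ t₂, greenKt α β γ δ r s * h s := by
      intro s
      rw [_root_.MeasureTheory.integral_mul_const, greenKt_integral α β γ δ s t₁ t₂ h12]
      ring
    calc hammOp α β γ δ g f u t₂ - hammOp α β γ δ g f u t₁
        = ∫ s in Set.Ioc (0:ℝ) 1, (greenK α β γ δ t₂ s * h s - greenK α β γ δ t₁ s * h s) := by
          rw [hOp t₂, hOp t₁, ← integral_sub (hIntK t₂) (hIntK t₁)]
      _ = ∫ s in Set.Ioc (0:ℝ) 1, ∫ r in Set.Ioc t₁ t₂, greenKt α β γ δ r s * h s :=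
          integral_congr_ae (Filter.Eventually.of_forall hsub)
      _ = ∫ r in Set.Ioc t₁ t₂, ∫ s in Set.Ioc (0:ℝ) 1, greenKt α β γ δ r s * h s :=
          integral_integral_swap hprod
      _ = ∫ r in Set.Ioc t₁ t₂, Dop α β γ δ g f u r :=
          integral_congr_ae (Filter.Eventually.of_forall (fun r => (hDop r).symm))
  -- the equicontinuity estimate
  have hDdiff : ∀ t₁ t₂, t₁ ≤ t₂ → |Dop α β γ δ g f u t₂ - Dop α β γ δ g f u t₁|
      ≤ kdC α β γ δ * CH * (primG g t₂ - primG g t₁) := by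
    intro t₁ t₂ h12
    have hI : ∀ c d : ℝ, IntervalIntegrable ((Set.Ioc (0:ℝ) 1).indicator fun s => |g s|)
        volume c d := fun c d =>
      (MeasureTheory.IntegrableOn.integrable_indicator
        ((hg.mono_set Set.Ioc_subset_Icc_self).abs) measurableSet_Ioc).intervalIntegrable
    have hIndInt : Integrable ((Set.Ioc t₁ t₂).indicator fun x => kdC α β γ δ * (CH * |g x|)) μ :=
      (((hg.mono_set hIccIoc).abs.const_mul CH).const_mul (kdC α β γ δ)).indicator
        measurableSet_Ioc
    have key : ‖∫ s in Set.Ioc (0:ℝ) 1, (greenKt α β γ δ t₂ s - greenKt α β γ δ t₁ s) * h s‖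
        ≤ ∫ s in Set.Ioc (0:ℝ) 1,
            (Set.Ioc t₁ t₂).indicator (fun x => kdC α β γ δ * (CH * |g x|)) s := by
      refine norm_integral_le_of_norm_le hIndInt ?_
      filter_upwards [hbnd', ae_restrict_mem measurableSet_Ioc,
        ae_restrict_of_ae (ae_ne_real t₁)] with s hs1 hs2 hs3
      rw [Real.norm_eq_abs, abs_mul]
      have hk := greenKt_sub_abs_le hα hβ hγ hδ hΓ h12 (hIccIoc hs2) hs3
      calc |greenKt α β γ δ t₂ s - greenKt α β γ δ t₁ s| * |h s|
          ≤ (kdC α β γ δ * Set.indicator (Set.Ioc t₁ t₂) (fun _ => (1:ℝ)) s) * (CH * |g s|) :=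
            mul_le_mul hk hs1 (abs_nonneg _) (mul_nonneg (kdC_nonneg hα hβ hγ hδ hΓ)
              (Set.indicator_nonneg (fun _ _ => zero_le_one) s))
        _ = (Set.Ioc t₁ t₂).indicator (fun x => kdC α β γ δ * (CH * |g x|)) s := by
            by_cases hmem : s ∈ Set.Ioc t₁ t₂
            · simp only [Set.indicator_of_mem hmem]; ring
            · simp [hmem]
    have hRHS : ∫ s in Set.Ioc (0:ℝ) 1,
          (Set.Ioc t₁ t₂).indicator (fun x => kdC α β γ δ * (CH * |g x|)) s
        = kdC α β γ δ * CH * (primG g t₂ - primG g t₁) := by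
      have hprim : primG g t₂ - primG g t₁ = ∫ s in Set.Ioc t₁ t₂ ∩ Set.Ioc (0:ℝ) 1, |g s| := by
        unfold primG
        rw [intervalIntegral.integral_interval_sub_left (hI 0 t₂) (hI 0 t₁),
          intervalIntegral.integral_of_le h12, setIntegral_indicator measurableSet_Ioc]
      rw [setIntegral_indicator measurableSet_Ioc, hprim, MeasureTheory.integral_const_mul, MeasureTheory.integral_const_mul,
        Set.inter_comm]
      ring
    have hDsub : Dop α β γ δ g f u t₂ - Dop α β γ δ g f u t₁
        = ∫ s in Set.Ioc (0:ℝ) 1, (greenKt α β γ δ t₂ s - greenKt α β γ δ t₁ s) * h s := by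
      rw [hDop t₂, hDop t₁, ← integral_sub (hIntKt t₂) (hIntKt t₁)]
      simp_rw [sub_mul]
      rfl
    rw [hDsub, ← Real.norm_eq_abs]
    exact key.trans_eq hRHS
  -- bounds
  have hboundOp : ∀ t ∈ Set.Icc (0:ℝ) 1, |hammOp α β γ δ g f u t| ≤ CH * Mone α β γ δ g := by
    intro t ht
    have h1 : ‖∫ s in Set.Ioc (0:ℝ) 1, greenK α β γ δ t s * h s‖
        ≤ ∫ s in Set.Ioc (0:ℝ) 1, CH * (greenK α β γ δ t s * |g s|) := by
      refine norm_integral_le_of_norm_le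
        ((integrableOn_greenK_abs_g hα hβ hγ hδ hΓ hg ht).const_mul CH) ?_
      filter_upwards [hbnd', ae_restrict_mem measurableSet_Ioc] with s hs1 hs2
      have hs' : s ∈ Set.Icc (0:ℝ) 1 := hIccIoc hs2
      have hknn := greenK_nonneg hα hβ hγ hδ hΓ ht hs'
      rw [Real.norm_eq_abs, abs_mul, abs_of_nonneg hknn]
      calc greenK α β γ δ t s * |h s| ≤ greenK α β γ δ t s * (CH * |g s|) :=
            mul_le_mul_of_nonneg_left hs1 hknn
        _ = CH * (greenK α β γ δ t s * |g s|) := by ring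
    rw [← Real.norm_eq_abs, hOp t]
    refine h1.trans ?_
    rw [MeasureTheory.integral_const_mul]
    refine mul_le_mul_of_nonneg_left ?_ hCH0
    rw [← intervalIntegral.integral_of_le zero_le_one]
    exact I1_le_Mone hα hβ hγ hδ hΓ hg ht
  have hboundD : ∀ t ∈ Set.Icc (0:ℝ) 1, |Dop α β γ δ g f u t| ≤ CH * Mtwo α β γ δ g := by
    intro t ht
    have h1 : ‖∫ s in Set.Ioc (0:ℝ) 1, greenKt α β γ δ t s * h s‖
        ≤ ∫ s in Set.Ioc (0:ℝ) 1, CH * (|greenKt α β γ δ t s| * |g s|) := by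
      refine norm_integral_le_of_norm_le
        ((integrableOn_greenKt_abs_g hα hβ hγ hδ hΓ hg t).const_mul CH) ?_
      filter_upwards [hbnd'] with s hs1
      rw [Real.norm_eq_abs, abs_mul]
      calc |greenKt α β γ δ t s| * |h s| ≤ |greenKt α β γ δ t s| * (CH * |g s|) :=
            mul_le_mul_of_nonneg_left hs1 (abs_nonneg _)
        _ = CH * (|greenKt α β γ δ t s| * |g s|) := by ring
    rw [← Real.norm_eq_abs, hDop t]
    refine h1.trans ?_
    rw [MeasureTheory.integral_const_mul]
    refine mul_le_mul_of_nonneg_left ?_ hCH0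
    rw [← intervalIntegral.integral_of_le zero_le_one]
    exact I2_le_Mtwo hα hβ hγ hδ hΓ hg ht
  -- continuity of Dop and differentiability
  have habs : ∀ a b : ℝ, |Dop α β γ δ g f u a - Dop α β γ δ g f u b|
      ≤ kdC α β γ δ * CH * |primG g a - primG g b| := by
    intro a b
    rcases le_total b a with hba | hab
    · have h1 := hDdiff b a hba
      have h2 : |primG g a - primG g b| = primG g a - primG g b :=
        abs_of_nonneg (sub_nonneg.mpr (primG_mono hg hba))
      rw [h2]; exact h1
    · have h1 := hDdiff a b hab
      have h2 : |primG g a - primG g b| = primG g b - primG g a := by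
        rw [abs_sub_comm]
        exact abs_of_nonneg (sub_nonneg.mpr (primG_mono hg hab))
      rw [abs_sub_comm, h2]; exact h1
  have hK0 : 0 ≤ kdC α β γ δ * CH := mul_nonneg (kdC_nonneg hα hβ hγ hδ hΓ) hCH0
  have hDcont : Continuous (Dop α β γ δ g f u) := by
    refine continuous_iff_continuousAt.mpr (fun x => ?_)
    rw [Metric.continuousAt_iff]
    intro ε hε
    obtain ⟨δ', hδ', hGδ⟩ :=
      Metric.continuousAt_iff.mp ((primG_continuous hg).continuousAt)
        (ε / (kdC α β γ δ * CH + 1)) (by positivity)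
    refine ⟨δ', hδ', fun {y} hy => ?_⟩
    have h1 : dist (Dop α β γ δ g f u y) (Dop α β γ δ g f u x)
        ≤ kdC α β γ δ * CH * dist (primG g y) (primG g x) := by
      rw [Real.dist_eq, Real.dist_eq]
      exact habs y x
    have h2 := hGδ hy
    calc dist (Dop α β γ δ g f u y) (Dop α β γ δ g f u x)
        ≤ kdC α β γ δ * CH * dist (primG g y) (primG g x) := h1
      _ ≤ kdC α β γ δ * CH * (ε / (kdC α β γ δ * CH + 1)) :=
          mul_le_mul_of_nonneg_left h2.le hK0
      _ < ε := by
          rw [mul_comm, div_mul_eq_mul_div, div_lt_iff₀ (by positivity)]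
          nlinarith
  have hderiv : ∀ t, HasDerivAt (hammOp α β γ δ g f u) (Dop α β γ δ g f u t) t := by
    intro t
    have hrepr0 : ∀ t' : ℝ, hammOp α β γ δ g f u t'
        = hammOp α β γ δ g f u 0 + ∫ r in (0:ℝ)..t', Dop α β γ δ g f u r := by
      intro t'
      rcases le_total 0 t' with h | h
      · rw [intervalIntegral.integral_of_le h, ← hrepr 0 t' h]; ring
      · rw [intervalIntegral.integral_symm, intervalIntegral.integral_of_le h, ← hrepr t' 0 h]
        ring
    have hD := ((hDcont.integral_hasStrictDerivAt 0 t).hasDerivAt).const_add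
      (hammOp α β γ δ g f u 0)
    have heq : (fun t' => hammOp α β γ δ g f u 0 + ∫ r in (0:ℝ)..t', Dop α β γ δ g f u r)
        = hammOp α β γ δ g f u := funext fun t' => (hrepr0 t').symm
    rwa [heq] at hD
  exact ⟨hderiv, hrepr, hboundOp, hboundD, habs, hDcont⟩

end Master

theorem hammOp_image_relatively_compact
    (α β γ δ : ℝ) (hα : 0 ≤ α) (hβ : 0 ≤ β) (hγ : 0 ≤ γ) (hδ : 0 ≤ δ)
    (hΓ : 0 < γ * β + α * γ + α * δ)
    (g : ℝ → ℝ) (f : ℝ → ℝ → ℝ) (R : ℝ) (hR : 0 < R)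
    (H : ℝ → ℝ) (CH : ℝ)
    -- (H₁)
    (hg : IntegrableOn g (Set.Icc (0 : ℝ) 1))
    -- (H₂)
    (hHmeas : Measurable H)
    (hH : ∀ᵐ t ∂(volume.restrict (Set.Icc (0 : ℝ) 1)),
      ∀ x ∈ Set.Icc (-R) R, |f t x| ≤ H t)
    (hHC : ∀ᵐ t ∂(volume.restrict (Set.Icc (0 : ℝ) 1)), |H t| ≤ CH)
    -- (H₃)
    (hRC : CH * (Mone α β γ δ g + Mtwo α β γ δ g) ≤ R)
    -- (H₄)
    (hmeas : ∀ u : ℝ → ℝ, memBallC1 R u →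
      AEMeasurable (fun t => f t (u t)) (volume.restrict (Set.Icc (0 : ℝ) 1))) :
    -- `T(B̄_R)` is relatively compact in `C¹([0,1])`: every sequence in the image
    -- has a subsequence converging in the `C¹` norm.
    ∀ v : ℕ → (ℝ → ℝ), (∀ n, ∃ u : ℝ → ℝ, memBallC1 R u ∧ v n = hammOp α β γ δ g f u) →
      ∃ (φ : ℕ → ℕ) (w : ℝ → ℝ), StrictMono φ ∧ memBallC1 R w ∧
        Filter.Tendsto (fun n => normC1 (fun t => v (φ n) t - w t))
          Filter.atTop (nhds 0) := by

  intro v hv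
  choose u hu hvu using hv
  have hCH0 : 0 ≤ CH := by
    have hne : (volume.restrict (Set.Icc (0:ℝ) 1)) ≠ 0 := by
      rw [Ne, Measure.restrict_eq_zero]
      simp [Real.volume_Icc]
    haveI : (ae (volume.restrict (Set.Icc (0:ℝ) 1))).NeBot := ae_neBot.mpr hne
    obtain ⟨t, ht⟩ := hHC.exists
    exact (abs_nonneg _).trans ht
  set Dn : ℕ → ℝ → ℝ := fun n => Dop α β γ δ g f (u n) with hDn
  have facts := fun n => hammOp_facts hα hβ hγ hδ hΓ hg hH hHC hCH0 (u n) (hu n)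
    (hmeas (u n) (hu n))
  have h1 : ∀ n t, HasDerivAt (v n) (Dn n t) t := fun n t => by
    rw [hvu n]; exact (facts n).1 t
  have h2 : ∀ n t₁ t₂, t₁ ≤ t₂ → v n t₂ - v n t₁ = ∫ r in Set.Ioc t₁ t₂, Dn n r :=
    fun n t₁ t₂ h12 => by rw [hvu n]; exact (facts n).2.1 t₁ t₂ h12
  have h3 : ∀ n, ∀ t ∈ Set.Icc (0:ℝ) 1, |v n t| ≤ CH * Mone α β γ δ g :=
    fun n t ht => by rw [hvu n]; exact (facts n).2.2.1 t ht
  have h4 : ∀ n, ∀ t ∈ Set.Icc (0:ℝ) 1, |Dn n t| ≤ CH * Mtwo α β γ δ g :=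
    fun n t ht => (facts n).2.2.2.1 t ht
  have h5 : ∀ n, ∀ a b : ℝ, |Dn n a - Dn n b| ≤ kdC α β γ δ * CH * |primG g a - primG g b| :=
    fun n a b => (facts n).2.2.2.2.1 a b
  have hDcont : ∀ n, Continuous (Dn n) := fun n => (facts n).2.2.2.2.2
  have hK0 : 0 ≤ kdC α β γ δ * CH := mul_nonneg (kdC_nonneg hα hβ hγ hδ hΓ) hCH0
  haveI : CompactSpace (Set.Icc (0:ℝ) 1) := isCompact_iff_compactSpace.mp isCompact_Icc
  -- package the derivatives as bounded continuous functions on [0,1]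
  set P : ℕ → BoundedContinuousFunction (Set.Icc (0:ℝ) 1) ℝ := fun n =>
    BoundedContinuousFunction.mkOfCompact
      ⟨fun x => Dn n x, (hDcont n).comp continuous_subtype_val⟩ with hP
  set A : Set (BoundedContinuousFunction (Set.Icc (0:ℝ) 1) ℝ) := Set.range P with hA
  have hequi : Equicontinuous ((↑) : A → (Set.Icc (0:ℝ) 1) → ℝ) := by
    intro x₀
    rw [Metric.equicontinuousAt_iff]
    intro ε hε
    obtain ⟨δ', hδ', hGδ⟩ :=
      Metric.continuousAt_iff.mp ((primG_continuous hg).continuousAt (x := (x₀ : ℝ)))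
        (ε / (kdC α β γ δ * CH + 1)) (by positivity)
    refine ⟨δ', hδ', fun x hx i => ?_⟩
    obtain ⟨n, hn⟩ := i.2
    have hcoe : ∀ y : Set.Icc (0:ℝ) 1, (i : (Set.Icc (0:ℝ) 1) → ℝ) y = Dn n y := by
      intro y
      rw [← hn]
      rfl
    rw [hcoe x, hcoe x₀]
    have hdx : dist (x : ℝ) (x₀ : ℝ) < δ' := hx
    have hG := hGδ hdx
    calc dist (Dn n x₀) (Dn n x) ≤ kdC α β γ δ * CH * dist (primG g x₀) (primG g x) := by
          rw [Real.dist_eq, Real.dist_eq]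
          exact h5 n x₀ x
      _ ≤ kdC α β γ δ * CH * (ε / (kdC α β γ δ * CH + 1)) := by
          rw [dist_comm]
          exact mul_le_mul_of_nonneg_left hG.le hK0
      _ < ε := by
          rw [mul_comm, div_mul_eq_mul_div, div_lt_iff₀ (by positivity)]
          nlinarith
  have hAA : IsCompact (closure A) := by
    refine BoundedContinuousFunction.arzela_ascoli
      (Set.Icc (-(CH * Mtwo α β γ δ g)) (CH * Mtwo α β γ δ g)) isCompact_Icc A ?_ hequi
    rintro F x ⟨n, rfl⟩
    have := h4 n x x.2
    rw [abs_le] at this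
    exact ⟨this.1, this.2⟩
  obtain ⟨w₁, hw₁mem, φ₁, hφ₁, hφ₁tend⟩ :=
    hAA.tendsto_subseq (x := P) (fun n => subset_closure ⟨n, rfl⟩)
  have hdist1 : Filter.Tendsto (fun n => dist (P (φ₁ n)) w₁) Filter.atTop (nhds 0) :=
    tendsto_iff_dist_tendsto_zero.mp hφ₁tend
  -- Bolzano–Weierstrass for the values at 0
  have hx0 : ∀ n, v (φ₁ n) 0 ∈ Set.Icc (-(CH * Mone α β γ δ g)) (CH * Mone α β γ δ g) := by
    intro n
    have := h3 (φ₁ n) 0 (Set.left_mem_Icc.mpr zero_le_one)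
    rw [abs_le] at this
    exact ⟨this.1, this.2⟩
  obtain ⟨c, _, φ₂, hφ₂, hφ₂tend⟩ :=
    tendsto_subseq_of_bounded (Metric.isBounded_Icc _ _) hx0
  set φ : ℕ → ℕ := φ₁ ∘ φ₂ with hφdef
  have hφmono : StrictMono φ := hφ₁.comp hφ₂
  -- the limit function
  set W1 : ℝ → ℝ := fun t => w₁ (Set.projIcc (0:ℝ) 1 zero_le_one t) with hW1
  have hW1cont : Continuous W1 := w₁.continuous.comp continuous_projIcc
  have hW1eq : ∀ (t : ℝ) (ht : t ∈ Set.Icc (0:ℝ) 1), W1 t = w₁ ⟨t, ht⟩ := by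
    intro t ht
    rw [hW1]
    simp only
    rw [Set.projIcc_of_mem zero_le_one ht]
  set w : ℝ → ℝ := fun t => c + ∫ r in (0:ℝ)..t, W1 r with hw
  have hwD : ∀ t, HasDerivAt w (W1 t) t := fun t =>
    ((hW1cont.integral_hasStrictDerivAt 0 t).hasDerivAt).const_add c
  have hwderiv : ∀ t, deriv w t = W1 t := fun t => (hwD t).deriv
  -- pointwise comparison of derivatives on [0,1]
  have hPapp : ∀ m, ∀ t : ℝ, ∀ ht : t ∈ Set.Icc (0:ℝ) 1,
      |Dn m t - W1 t| ≤ dist (P m) w₁ := by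
    intro m t ht
    have h := BoundedContinuousFunction.dist_coe_le_dist
      (f := P m) (g := w₁) (⟨t, ht⟩ : Set.Icc (0:ℝ) 1)
    rw [hW1eq t ht, ← Real.dist_eq]
    exact h
  -- uniform comparison of the functions on [0,1]
  have hVW : ∀ m, ∀ t ∈ Set.Icc (0:ℝ) 1,
      |v m t - w t| ≤ |v m 0 - c| + dist (P m) w₁ := by
    intro m t ht
    have hDnint : IntegrableOn (Dn m) (Set.Ioc 0 t) volume := (hDcont m).integrableOn_Ioc
    have hW1int : IntegrableOn W1 (Set.Ioc 0 t) volume := hW1cont.integrableOn_Ioc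
    have hsplit : v m t - w t = (v m 0 - c) + ∫ r in Set.Ioc 0 t, (Dn m r - W1 r) := by
      have e1 : v m t = v m 0 + ∫ r in Set.Ioc 0 t, Dn m r := by
        have := h2 m 0 t ht.1; linarith
      have e2 : w t = c + ∫ r in Set.Ioc 0 t, W1 r := by
        rw [hw]; simp only; rw [intervalIntegral.integral_of_le ht.1]
      rw [e1, e2, integral_sub hDnint hW1int]
      ring
    rw [hsplit]
    refine (abs_add_le _ _).trans (add_le_add_right ?_ _)
    have hb : ∀ r ∈ Set.Ioc (0:ℝ) t, ‖Dn m r - W1 r‖ ≤ dist (P m) w₁ := by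
      intro r hr
      have hr' : r ∈ Set.Icc (0:ℝ) 1 := ⟨hr.1.le, hr.2.trans ht.2⟩
      rw [Real.norm_eq_abs]
      exact hPapp m r hr'
    have hnb := norm_setIntegral_le_of_norm_le_const (μ := volume) (s := Set.Ioc 0 t)
      measure_Ioc_lt_top hb
    rw [Real.norm_eq_abs] at hnb
    refine hnb.trans ?_
    have hvol : (volume (Set.Ioc (0:ℝ) t)).toReal ≤ 1 := by
      rw [Real.volume_Ioc, ENNReal.toReal_ofReal (by linarith [ht.1])]
      linarith [ht.2]
    calc dist (P m) w₁ * (volume (Set.Ioc (0:ℝ) t)).toReal ≤ dist (P m) w₁ * 1 :=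
        mul_le_mul_of_nonneg_left hvol dist_nonneg
      _ = dist (P m) w₁ := mul_one _
  set bf : ℕ → ℝ := fun n => |v (φ n) 0 - c| + dist (P (φ n)) w₁ with hbf
  have hdist2 : Filter.Tendsto (fun n => dist (P (φ n)) w₁) Filter.atTop (nhds 0) :=
    hdist1.comp hφ₂.tendsto_atTop
  have hv0 : Filter.Tendsto (fun n => |v (φ n) 0 - c|) Filter.atTop (nhds 0) := by
    have := tendsto_iff_dist_tendsto_zero.mp hφ₂tend
    simpa [Function.comp, Real.dist_eq, hφdef] using this
  have hbf0 : Filter.Tendsto bf Filter.atTop (nhds 0) := by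
    have := hv0.add hdist2
    simpa using this
  have hwdiff : Differentiable ℝ w := fun t => (hwD t).differentiableAt
  have hderivw : deriv w = W1 := funext hwderiv
  have hMone0 : 0 ≤ CH * Mone α β γ δ g := mul_nonneg hCH0 (Mone_nonneg hα hβ hγ hδ hΓ hg)
  have hMtwo0 : 0 ≤ CH * Mtwo α β γ δ g := mul_nonneg hCH0 (Mtwo_nonneg hα hβ hγ hδ hΓ hg)
  have hwb : ∀ t ∈ Set.Icc (0:ℝ) 1, |w t| ≤ CH * Mone α β γ δ g := by
    intro t ht
    have hle : ∀ n, |w t| ≤ CH * Mone α β γ δ g + bf n := by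
      intro n
      have h6 : |w t| - |v (φ n) t| ≤ |v (φ n) t - w t| := by
        rw [abs_sub_comm]
        exact abs_sub_abs_le_abs_sub _ _
      have h7 := h3 (φ n) t ht
      have h8 := hVW (φ n) t ht
      rw [hbf]
      simp only
      linarith
    have hlim : Filter.Tendsto (fun n => CH * Mone α β γ δ g + bf n) Filter.atTop
        (nhds (CH * Mone α β γ δ g)) := by
      simpa using tendsto_const_nhds.add hbf0
    exact ge_of_tendsto hlim (Filter.Eventually.of_forall hle)
  have hW1b : ∀ t ∈ Set.Icc (0:ℝ) 1, |W1 t| ≤ CH * Mtwo α β γ δ g := by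
    intro t ht
    have hle : ∀ n, |W1 t| ≤ CH * Mtwo α β γ δ g + dist (P (φ n)) w₁ := by
      intro n
      have h6 : |W1 t| - |Dn (φ n) t| ≤ |Dn (φ n) t - W1 t| := by
        rw [abs_sub_comm]
        exact abs_sub_abs_le_abs_sub _ _
      have h7 := h4 (φ n) t ht
      have h8 := hPapp (φ n) t ht
      linarith
    have hlim : Filter.Tendsto (fun n => CH * Mtwo α β γ δ g + dist (P (φ n)) w₁)
        Filter.atTop (nhds (CH * Mtwo α β γ δ g)) := by
      simpa using tendsto_const_nhds.add hdist2
    exact ge_of_tendsto hlim (Filter.Eventually.of_forall hle)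
  have hnorm : normC1 w ≤ R := by
    have hs1 : sSup ((fun t => |w t|) '' Set.Icc (0:ℝ) 1) ≤ CH * Mone α β γ δ g := by
      refine Real.sSup_le ?_ hMone0
      rintro x ⟨t, ht, rfl⟩
      exact hwb t ht
    have hs2 : sSup ((fun t => |deriv w t|) '' Set.Icc (0:ℝ) 1) ≤ CH * Mtwo α β γ δ g := by
      refine Real.sSup_le ?_ hMtwo0
      rintro x ⟨t, ht, rfl⟩
      simp only
      rw [hwderiv t]
      exact hW1b t ht
    have heq : CH * (Mone α β γ δ g + Mtwo α β γ δ g)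
        = CH * Mone α β γ δ g + CH * Mtwo α β γ δ g := by ring
    unfold normC1
    linarith
  have hmem : memBallC1 R w := ⟨hwdiff.continuous.continuousOn,
    fun t _ => (hwD t).differentiableAt, by rw [hderivw]; exact hW1cont.continuousOn, hnorm⟩
  refine ⟨φ, w, hφmono, hmem, ?_⟩
  have hub : ∀ n, normC1 (fun t => v (φ n) t - w t) ≤ bf n + dist (P (φ n)) w₁ := by
    intro n
    have hs1 : sSup ((fun t => |v (φ n) t - w t|) '' Set.Icc (0:ℝ) 1) ≤ bf n := by
      refine Real.sSup_le ?_ (add_nonneg (abs_nonneg _) dist_nonneg)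
      rintro x ⟨t, ht, rfl⟩
      exact hVW (φ n) t ht
    have hs2 : sSup ((fun t => |deriv (fun t' => v (φ n) t' - w t') t|) '' Set.Icc (0:ℝ) 1)
        ≤ dist (P (φ n)) w₁ := by
      refine Real.sSup_le ?_ dist_nonneg
      rintro x ⟨t, ht, rfl⟩
      simp only
      have hd : deriv (fun t' => v (φ n) t' - w t') t = Dn (φ n) t - W1 t :=
        ((h1 (φ n) t).sub (hwD t)).deriv
      rw [hd]
      exact hPapp (φ n) t ht
    unfold normC1
    exact add_le_add hs1 hs2
  have hlb : ∀ n, 0 ≤ normC1 (fun t => v (φ n) t - w t) := by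
    intro n
    unfold normC1
    exact add_nonneg (Real.sSup_nonneg (by rintro x ⟨t, ht, rfl⟩; exact abs_nonneg _))
      (Real.sSup_nonneg (by rintro x ⟨t, ht, rfl⟩; exact abs_nonneg _))
  have hbb : Filter.Tendsto (fun n => bf n + dist (P (φ n)) w₁) Filter.atTop (nhds 0) := by
    simpa using hbf0.add hdist2
  exact squeeze_zero hlb hub hbb
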